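/- Let f : I ⊆ (0,∞) → (0,∞) be differentiable on I°, let a, b ∈ I° with a < b, f' integrable on [a,b], and suppose |f'|^q is s-geometrically convex on [a,b] for some q > 1 and s ∈ (0,1]. If |f'(a)| ≥ 1 and |f'(b)| ≥ 1, then |(f(a)+f(b))/2 − (1/(ln b − ln a)) ∫_a^b f(x)/x dx| ≤ (1/2) ln(b/a) · ((q−1)/(2q−1))^{1−1/q} · [ a|f'(a)||f'(b)|^{1−s} g₂(θ₁)^{1/q} + b|f'(b)||f'(a)|^{1−s} g₂(θ₂)^{1/q} ]. -/

import Mathlib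

open Real MeasureTheory Set

/-- `g` is `s`-geometrically convex on `J`. -/
def SGeometricallyConvexOn (s : ℝ) (J : Set ℝ) (g : ℝ → ℝ) : Prop :=
  ∀ x ∈ J, ∀ y ∈ J, ∀ t ∈ Set.Icc (0:ℝ) 1,
    g (x ^ t * y ^ (1 - t)) ≤ g x ^ t ^ s * g y ^ (1 - t) ^ s

noncomputable def g₁ (u : ℝ) : ℝ :=
  if u = 1 then 1/2 else (u * Real.log u - u + 1) / (Real.log u) ^ 2

noncomputable def g₂ (u : ℝ) : ℝ :=
  if u = 1 then 1 else (u - 1) / Real.log u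

lemma g₂_nonneg {u : ℝ} (hu : 0 < u) : 0 ≤ g₂ u := by
  unfold g₂
  rcases eq_or_ne u 1 with h | h
  · simp [h]
  · simp only [h, if_false]
    rcases lt_or_gt_of_ne h with hlt | hgt
    · exact div_nonneg_of_nonpos (by linarith) (Real.log_neg hu hlt).le
    · exact div_nonneg (by linarith) (Real.log_pos hgt).le

lemma integral_rpow_const_base {c : ℝ} (hc : 0 < c) :
    ∫ t in (0:ℝ)..1, c ^ t = g₂ c := by
  rcases eq_or_ne c 1 with h | h
  · simp [h, g₂]
  · have hlc : Real.log c ≠ 0 := Real.log_ne_zero_of_pos_of_ne_one hc h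
    have hrw : ∀ t : ℝ, c ^ t = Real.exp (Real.log c * t) := by
      intro t; rw [Real.rpow_def_of_pos hc]
    rw [intervalIntegral.integral_congr (g := fun t => Real.exp (Real.log c * t))
      (fun t _ => hrw t)]
    rw [intervalIntegral.integral_comp_mul_left (a := (0:ℝ)) (b := 1)
      (fun x => Real.exp x) hlc]
    simp [g₂, h, Real.exp_log hc, smul_eq_mul]
    rw [inv_mul_eq_div]

lemma rpow_le_lin {t s : ℝ} (ht0 : 0 ≤ t) (hs0 : 0 ≤ s) (hs1 : s ≤ 1) :
    t ^ s ≤ s * t + (1 - s) := by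
  have := Real.geom_mean_le_arith_mean2_weighted hs0 (by linarith : (0:ℝ) ≤ 1 - s)
    ht0 zero_le_one (by ring)
  simpa [Real.one_rpow] using this.trans_eq (by ring)

lemma integral_abs_half_rpow {p : ℝ} (hp : 0 < p) :
    ∫ t in (0:ℝ)..1, |1/2 - t| ^ p = (1/2:ℝ) ^ p * (1/(p+1)) := by
  have hcont : Continuous fun t : ℝ => |1/2 - t| ^ p :=
    (continuous_const.sub continuous_id).abs.rpow_const (fun x => Or.inr hp.le)
  have hii : ∀ u v : ℝ, IntervalIntegrable (fun t : ℝ => |1/2 - t| ^ p) volume u v :=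
    fun u v => hcont.intervalIntegrable u v
  have hsplit := intervalIntegral.integral_add_adjacent_intervals
    (a := (0:ℝ)) (b := 1/2) (c := 1) (hii 0 (1/2)) (hii (1/2) 1)
  have hval : ∫ x in (0:ℝ)..(1/2), x ^ p = ((1/2:ℝ) ^ (p+1)) / (p+1) := by
    rw [integral_rpow (Or.inl (by linarith))]
    rw [Real.zero_rpow (by linarith : p + 1 ≠ 0)]
    ring
  have h1 : ∫ t in (0:ℝ)..(1/2), |1/2 - t| ^ p = ((1/2:ℝ) ^ (p+1)) / (p+1) := by
    rw [intervalIntegral.integral_congr (g := fun t : ℝ => (1/2 - t) ^ p)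
      (fun t ht => by
        rw [Set.uIcc_of_le (by norm_num : (0:ℝ) ≤ 1/2)] at ht
        rw [abs_of_nonneg (by linarith [ht.2] : (0:ℝ) ≤ 1/2 - t)])]
    rw [intervalIntegral.integral_comp_sub_left (fun x : ℝ => x ^ p) (1/2)]
    norm_num [hval]
  have h2 : ∫ t in (1/2:ℝ)..1, |1/2 - t| ^ p = ((1/2:ℝ) ^ (p+1)) / (p+1) := by
    rw [intervalIntegral.integral_congr (g := fun t : ℝ => (t - 1/2) ^ p)
      (fun t ht => by
        rw [Set.uIcc_of_le (by norm_num : (1/2:ℝ) ≤ 1)] at ht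
        rw [abs_of_nonpos (by linarith [ht.1] : (1/2:ℝ) - t ≤ 0), neg_sub])]
    rw [intervalIntegral.integral_comp_sub_right (fun x : ℝ => x ^ p) (1/2)]
    norm_num [hval]
  have hhalf : (1/2:ℝ) ^ (p+1) = (1/2:ℝ) ^ p * (1/2) := by
    rw [Real.rpow_add (by norm_num : (0:ℝ) < 1/2), Real.rpow_one]
  rw [← hsplit, h1, h2, hhalf]
  field_simp
  ring

set_option maxHeartbeats 2000000 in
theorem stmt_11
    (I : Set ℝ) (hI : I.OrdConnected) (hIpos : I ⊆ Set.Ioi (0:ℝ))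
    (f f' : ℝ → ℝ) (hfpos : ∀ x ∈ I, 0 < f x)
    (a b : ℝ) (ha : a ∈ interior I) (hb : b ∈ interior I) (hab : a < b)
    (hdiff : ∀ x ∈ interior I, HasDerivAt f (f' x) x)
    (hint : IntervalIntegrable f' volume a b)
    (q s : ℝ) (hq : 1 < q) (hs : s ∈ Set.Ioc (0:ℝ) 1)
    (hconv : SGeometricallyConvexOn s (Set.Icc a b) (fun x => |f' x| ^ q))
    (hfa : 1 ≤ |f' a|) (hfb : 1 ≤ |f' b|) :
    |(f a + f b) / 2 - (1 / (Real.log b - Real.log a)) * ∫ x in a..b, f x / x| ≤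
      (1 / 2 : ℝ) * Real.log (b / a) * ((q - 1) / (2 * q - 1)) ^ (1 - 1 / q) *
        (a * |f' a| * |f' b| ^ (1 - s) * (g₂ ((b * |f' b| ^ s / (a * |f' a| ^ s)) ^ (q))) ^ (1 / q)
         + b * |f' b| * |f' a| ^ (1 - s) * (g₂ ((a * |f' a| ^ s / (b * |f' b| ^ s)) ^ (q))) ^ (1 / q)) := by
  obtain ⟨hs0, hs1⟩ := hs
  have hq0 : (0:ℝ) < q := by linarith
  have haI : a ∈ I := interior_subset ha
  have hbI : b ∈ I := interior_subset hb
  have ha0 : (0:ℝ) < a := hIpos haI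
  have hb0 : (0:ℝ) < b := hIpos hbI
  have hIcc : Set.Icc a b ⊆ interior I := (hI.interior).out ha hb
  set L := Real.log b - Real.log a with hLdef
  have hL : 0 < L := sub_pos.2 (Real.log_lt_log ha0 hab)
  set A := |f' a| with hAdef
  set B := |f' b| with hBdef
  have hA0 : (0:ℝ) < A := lt_of_lt_of_le one_pos hfa
  have hB0 : (0:ℝ) < B := lt_of_lt_of_le one_pos hfb
  set φ : ℝ → ℝ := fun t => b * Real.exp (-(L * t)) with hφdef
  have hφ0 : φ 0 = b := by simp [hφdef]
  have hφ1 : φ 1 = a := by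
    simp only [hφdef, mul_one, hLdef, neg_sub, Real.exp_sub, Real.exp_log ha0,
      Real.exp_log hb0]
    field_simp
  have hφpos : ∀ t, 0 < φ t := fun t => mul_pos hb0 (Real.exp_pos _)
  have hφcont : Continuous φ := by
    exact continuous_const.mul (Real.continuous_exp.comp (continuous_const.mul continuous_id).neg)
  have hφderiv : ∀ t, HasDerivAt φ (-L * φ t) t := by
    intro t
    have h1 : HasDerivAt (fun u : ℝ => -(L * u)) (-L) t := by
      have h := ((hasDerivAt_id t).const_mul L).neg
      simp only [mul_one] at h
      exact h
    have := h1.exp.const_mul b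
    exact this.congr_deriv (by show b * (Real.exp (-(L * t)) * -L) = -L * (b * Real.exp (-(L * t))); ring)
  have hφmem : ∀ t ∈ Set.Icc (0:ℝ) 1, φ t ∈ Set.Icc a b := by
    rintro t ⟨ht0, ht1⟩
    constructor
    · rw [← hφ1]
      exact mul_le_mul_of_nonneg_left (Real.exp_le_exp.2 (by nlinarith)) hb0.le
    · calc φ t ≤ b * 1 :=
            mul_le_mul_of_nonneg_left (Real.exp_le_one_iff.2 (by nlinarith)) hb0.le
        _ = b := mul_one b
  have hlogφ : ∀ t, Real.log (φ t) = Real.log b - L * t := by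
    intro t
    rw [hφdef]
    rw [Real.log_mul hb0.ne' (Real.exp_ne_zero _), Real.log_exp]
    ring
  have hφr : ∀ t, φ t = a ^ t * b ^ (1 - t) := by
    intro t
    rw [Real.rpow_def_of_pos ha0, Real.rpow_def_of_pos hb0, ← Real.exp_add]
    show b * Real.exp (-(L * t)) = _
    nth_rewrite 1 [← Real.exp_log hb0]
    rw [← Real.exp_add]
    congr 1
    rw [hLdef]; ring
  have hconv' : ∀ t ∈ Set.Icc (0:ℝ) 1,
      |f' (φ t)| ^ q ≤ A ^ (q * t ^ s) * B ^ (q * (1 - t) ^ s) := by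
    intro t ht
    have h := hconv a (Set.left_mem_Icc.2 hab.le) b (Set.right_mem_Icc.2 hab.le) t ht
    simp only at h
    rw [← hφr t] at h
    rw [Real.rpow_mul hA0.le, Real.rpow_mul hB0.le]
    exact h
  have hwb : ∀ t ∈ Set.Icc (0:ℝ) 1, |f' (φ t)| ≤ A * B := by
    intro t ht
    have h1t0 : (0:ℝ) ≤ 1 - t := by linarith [ht.2]
    have h1t1 : (1:ℝ) - t ≤ 1 := by linarith [ht.1]
    have hts1 : t ^ s ≤ 1 := Real.rpow_le_one ht.1 ht.2 hs0.le
    have h1ts1 : (1 - t) ^ s ≤ 1 := Real.rpow_le_one h1t0 h1t1 hs0.le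
    have h2 : A ^ (q * t ^ s) ≤ A ^ q :=
      Real.rpow_le_rpow_of_exponent_le hfa (by nlinarith)
    have h3 : B ^ (q * (1 - t) ^ s) ≤ B ^ q :=
      Real.rpow_le_rpow_of_exponent_le hfb (by nlinarith)
    have h4 : |f' (φ t)| ^ q ≤ (A * B) ^ q := by
      calc |f' (φ t)| ^ q ≤ A ^ q * B ^ q := (hconv' t ht).trans
            (mul_le_mul h2 h3 (Real.rpow_nonneg hB0.le _) (Real.rpow_nonneg hA0.le _))
        _ = (A * B) ^ q := (Real.mul_rpow hA0.le hB0.le).symm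
    exact (Real.rpow_le_rpow_iff (abs_nonneg _) (mul_pos hA0 hB0).le hq0).1 h4
  set θ : ℝ := (a * A ^ s / (b * B ^ s)) ^ q with hθdef
  have hnum0 : 0 < a * A ^ s := mul_pos ha0 (Real.rpow_pos_of_pos hA0 s)
  have hden0 : 0 < b * B ^ s := mul_pos hb0 (Real.rpow_pos_of_pos hB0 s)
  have hθ0 : 0 < θ := Real.rpow_pos_of_pos (div_pos hnum0 hden0) q
  set C : ℝ := (A * B) ^ (q * (1 - s)) * (b * B ^ s) ^ q with hCdef
  have hC0 : 0 < C :=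
    mul_pos (Real.rpow_pos_of_pos (mul_pos hA0 hB0) _) (Real.rpow_pos_of_pos hden0 _)
  have hlogθ : Real.log θ
      = q * (Real.log a + s * Real.log A - Real.log b - s * Real.log B) := by
    rw [hθdef, Real.log_rpow (div_pos hnum0 hden0), Real.log_div hnum0.ne' hden0.ne',
      Real.log_mul ha0.ne' (Real.rpow_pos_of_pos hA0 s).ne',
      Real.log_mul hb0.ne' (Real.rpow_pos_of_pos hB0 s).ne',
      Real.log_rpow hA0, Real.log_rpow hB0]
    ring
  have hlogC : Real.log C
      = q * (1 - s) * (Real.log A + Real.log B) + q * (Real.log b + s * Real.log B) := by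
    rw [hCdef, Real.log_mul (Real.rpow_pos_of_pos (mul_pos hA0 hB0) _).ne'
        (Real.rpow_pos_of_pos hden0 _).ne',
      Real.log_rpow (mul_pos hA0 hB0), Real.log_rpow hden0,
      Real.log_mul hA0.ne' hB0.ne',
      Real.log_mul hb0.ne' (Real.rpow_pos_of_pos hB0 s).ne', Real.log_rpow hB0]
  have hkey : ∀ t ∈ Set.Icc (0:ℝ) 1, (φ t * |f' (φ t)|) ^ q ≤ C * θ ^ t := by
    intro t ht
    have step1 : (φ t * |f' (φ t)|) ^ q = φ t ^ q * |f' (φ t)| ^ q :=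
      Real.mul_rpow (hφpos t).le (abs_nonneg _)
    have step2 : φ t ^ q * |f' (φ t)| ^ q
        ≤ φ t ^ q * (A ^ (q * t ^ s) * B ^ (q * (1 - t) ^ s)) :=
      mul_le_mul_of_nonneg_left (hconv' t ht) (Real.rpow_nonneg (hφpos t).le _)
    rw [step1]
    refine step2.trans ?_
    have e1 : φ t ^ q * (A ^ (q * t ^ s) * B ^ (q * (1 - t) ^ s))
        = Real.exp ((Real.log b - L * t) * q
          + (Real.log A * (q * t ^ s) + Real.log B * (q * (1 - t) ^ s))) := by
      rw [Real.rpow_def_of_pos (hφpos t), Real.rpow_def_of_pos hA0, Real.rpow_def_of_pos hB0,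
        hlogφ t, ← Real.exp_add, ← Real.exp_add]
    have e2 : C * θ ^ t = Real.exp (Real.log C + Real.log θ * t) := by
      rw [Real.rpow_def_of_pos hθ0]
      nth_rewrite 1 [← Real.exp_log hC0]
      rw [← Real.exp_add]
    rw [e1, e2]
    apply Real.exp_le_exp.2
    rw [hlogθ, hlogC]
    have hts : t ^ s ≤ s * t + (1 - s) := rpow_le_lin ht.1 hs0.le hs1
    have h1ts : (1 - t) ^ s ≤ s * (1 - t) + (1 - s) :=
      rpow_le_lin (by linarith [ht.2]) hs0.le hs1
    have hlA : 0 ≤ Real.log A := Real.log_nonneg hfa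
    have hlB : 0 ≤ Real.log B := Real.log_nonneg hfb
    have key1 : 0 ≤ q * (Real.log A * (s * t + (1 - s) - t ^ s)) :=
      mul_nonneg hq0.le (mul_nonneg hlA (by linarith))
    have key2 : 0 ≤ q * (Real.log B * (s * (1 - t) + (1 - s) - (1 - t) ^ s)) :=
      mul_nonneg hq0.le (mul_nonneg hlB (by linarith))
    rw [hLdef]
    nlinarith [key1, key2]
  -- measurability infrastructure
  have hDeq : ∀ t ∈ Set.Icc (0:ℝ) 1, f' (φ t) = deriv f (φ t) :=
    fun t ht => ((hdiff (φ t) (hIcc (hφmem t ht))).deriv).symm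
  have hmeasD : Measurable fun t => deriv f (φ t) :=
    (measurable_deriv f).comp hφcont.measurable
  haveI hfin : IsFiniteMeasure (volume.restrict (Set.Ioc (0:ℝ) 1)) := by
    constructor
    rw [Measure.restrict_apply_univ]
    simp
  have hae : ∀ᵐ t ∂(volume.restrict (Set.Ioc (0:ℝ) 1)), t ∈ Set.Ioc (0:ℝ) 1 :=
    ae_restrict_mem measurableSet_Ioc
  set w : ℝ → ℝ := fun t => φ t * |f' (φ t)| with hwdef
  have hw_nonneg : ∀ t, 0 ≤ w t := fun t => mul_nonneg (hφpos t).le (abs_nonneg _)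
  have hw_meas : AEStronglyMeasurable w (volume.restrict (Set.Ioc (0:ℝ) 1)) := by
    apply (hφcont.measurable.mul hmeasD.abs).aestronglyMeasurable.congr
    filter_upwards [hae] with t ht
    rw [hwdef]
    simp only
    rw [hDeq t (Set.Ioc_subset_Icc_self ht)]
    rfl
  have hwb' : ∀ t ∈ Set.Icc (0:ℝ) 1, w t ≤ b * (A * B) := by
    intro t ht
    exact mul_le_mul (hφmem t ht).2 (hwb t ht) (abs_nonneg _) hb0.le
  have hv'_meas : AEStronglyMeasurable (fun t => f' (φ t) * (-L * φ t))
      (volume.restrict (Set.Ioc (0:ℝ) 1)) := by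
    apply (hmeasD.mul (((continuous_const (y := -L)).mul hφcont).measurable)).aestronglyMeasurable.congr
    filter_upwards [hae] with t ht
    rw [hDeq t (Set.Ioc_subset_Icc_self ht)]
    rfl
  have hv'_int : IntervalIntegrable (fun t => f' (φ t) * (-L * φ t)) volume 0 1 := by
    rw [intervalIntegrable_iff_integrableOn_Ioc_of_le zero_le_one]
    refine memLp_one_iff_integrable.mp (MemLp.of_bound hv'_meas ((A * B) * (L * b)) ?_)
    filter_upwards [hae] with t ht
    have h1 := hwb t (Set.Ioc_subset_Icc_self ht)
    have h2 : φ t ≤ b := (hφmem t (Set.Ioc_subset_Icc_self ht)).2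
    rw [Real.norm_eq_abs, abs_mul, abs_mul, abs_neg, abs_of_pos hL, abs_of_pos (hφpos t)]
    exact mul_le_mul h1 (mul_le_mul_of_nonneg_left h2 hL.le) (by positivity) (by positivity)
  -- change of variables
  have hfc : ContinuousOn f (Set.Icc a b) :=
    fun x hx => ((hdiff x (hIcc hx)).continuousAt).continuousWithinAt
  have himg : φ '' (Set.uIcc (0:ℝ) 1) ⊆ Set.Icc a b := by
    rw [Set.uIcc_of_le zero_le_one]
    rintro _ ⟨t, ht, rfl⟩
    exact hφmem t ht
  have hCoV : (∫ x in a..b, f x / x) = L * ∫ t in (0:ℝ)..1, f (φ t) := by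
    have hder : ∀ t ∈ Set.uIcc (0:ℝ) 1, HasDerivAt φ ((fun u => -L * φ u) t) t :=
      fun t _ => hφderiv t
    have hcont' : ContinuousOn (fun u => -L * φ u) (Set.uIcc (0:ℝ) 1) :=
      (continuous_const.mul hφcont).continuousOn
    have hgcont : ContinuousOn (fun x => f x / x) (φ '' Set.uIcc (0:ℝ) 1) := by
      apply ContinuousOn.mono _ himg
      exact hfc.div continuousOn_id (fun x hx => (lt_of_lt_of_le ha0 hx.1).ne')
    have h := intervalIntegral.integral_comp_smul_deriv' hder hcont' hgcont
    rw [hφ0, hφ1] at h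
    have h2 : (∫ t in (0:ℝ)..1, ((fun u => -L * φ u) t) • ((fun x => f x / x) ∘ φ) t)
        = ∫ t in (0:ℝ)..1, (-L) * f (φ t) := by
      apply intervalIntegral.integral_congr
      intro t _
      simp only [Function.comp, smul_eq_mul]
      field_simp
      simp [(hφpos t).ne']
    rw [h2] at h
    rw [intervalIntegral.integral_const_mul] at h
    have h3 : (∫ x in b..a, f x / x) = -∫ x in a..b, f x / x :=
      intervalIntegral.integral_symm a b
    rw [h3] at h
    linarith [h]
  -- integration by parts
  have hu : ∀ t ∈ Set.uIcc (0:ℝ) 1,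
      HasDerivAt (fun u : ℝ => 1/2 - u) ((fun _ : ℝ => (-1:ℝ)) t) t := by
    intro t _
    simpa using (hasDerivAt_id t).const_sub (1/2:ℝ)
  have hv : ∀ t ∈ Set.uIcc (0:ℝ) 1,
      HasDerivAt (fun u => f (φ u)) ((fun u => f' (φ u) * (-L * φ u)) t) t := by
    intro t ht
    rw [Set.uIcc_of_le zero_le_one] at ht
    exact (hdiff (φ t) (hIcc (hφmem t ht))).comp t (hφderiv t)
  have hibp := intervalIntegral.integral_mul_deriv_eq_deriv_mul hu hv
    (intervalIntegrable_const) hv'_int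
  rw [hφ0, hφ1] at hibp
  have hibp2 : (∫ t in (0:ℝ)..1, (-1 : ℝ) * f (φ t)) = -∫ t in (0:ℝ)..1, f (φ t) := by
    rw [intervalIntegral.integral_const_mul]
    ring
  have hq_ne : q ≠ 0 := hq0.ne'
  have hq1 : q - 1 ≠ 0 := sub_ne_zero.2 hq.ne'
  have h2q : 2 * q - 1 ≠ 0 := ne_of_gt (by linarith)
  -- main identity
  have hmain : (f a + f b)/2 - (1/L) * (∫ x in a..b, f x / x)
      = -(∫ t in (0:ℝ)..1, (1/2 - t) * (f' (φ t) * (-L * φ t))) := by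
    have hJ : (1/L) * (L * ∫ t in (0:ℝ)..1, f (φ t)) = ∫ t in (0:ℝ)..1, f (φ t) := by
      field_simp
    rw [hCoV, hJ]
    rw [hibp2] at hibp
    rw [hibp]
    ring
  have habs1 : |(f a + f b)/2 - (1/L) * (∫ x in a..b, f x / x)|
      ≤ L * ∫ t in (0:ℝ)..1, |1/2 - t| * w t := by
    rw [hmain, abs_neg]
    refine (intervalIntegral.abs_integral_le_integral_abs zero_le_one).trans ?_
    have h2 : (∫ t in (0:ℝ)..1, |(1/2 - t) * (f' (φ t) * (-L * φ t))|)
        = ∫ t in (0:ℝ)..1, L * (|1/2 - t| * w t) := by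
      apply intervalIntegral.integral_congr
      intro t _
      simp only [hwdef]
      rw [abs_mul, abs_mul, abs_mul, abs_neg, abs_of_pos hL, abs_of_pos (hφpos t)]
      ring
    rw [h2, intervalIntegral.integral_const_mul]
  -- Hölder
  set p : ℝ := q / (q - 1) with hpdef
  have hp0 : 0 < p := div_pos (by linarith) (by linarith)
  have hpq : Real.HolderConjugate p q := by
    rw [Real.holderConjugate_iff]
    constructor
    · rw [hpdef]
      exact (one_lt_div (by linarith)).2 (by linarith)
    · rw [hpdef]
      field_simp
      ring
  have hu_mem : MemLp (fun t : ℝ => |1/2 - t|) (ENNReal.ofReal p)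
      (volume.restrict (Set.Ioc (0:ℝ) 1)) := by
    refine MemLp.of_bound ((continuous_const.sub continuous_id).abs.aestronglyMeasurable) 1 ?_
    filter_upwards [hae] with t ht
    rw [Real.norm_eq_abs, abs_abs, abs_le]
    constructor <;> [linarith [ht.2]; linarith [ht.1]]
  have hw_mem : MemLp w (ENNReal.ofReal q) (volume.restrict (Set.Ioc (0:ℝ) 1)) := by
    refine MemLp.of_bound hw_meas (b * (A * B)) ?_
    filter_upwards [hae] with t ht
    rw [Real.norm_eq_abs, abs_of_nonneg (hw_nonneg t)]
    exact hwb' t (Set.Ioc_subset_Icc_self ht)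
  have hHolder := MeasureTheory.integral_mul_le_Lp_mul_Lq_of_nonneg hpq
    (Filter.Eventually.of_forall (fun t => abs_nonneg _))
    (Filter.Eventually.of_forall hw_nonneg) hu_mem hw_mem
  have conv1 : ∀ g : ℝ → ℝ, (∫ t in (0:ℝ)..1, g t)
      = ∫ t, g t ∂(volume.restrict (Set.Ioc (0:ℝ) 1)) :=
    fun g => intervalIntegral.integral_of_le zero_le_one
  -- compare ∫ w^q with C * g₂ θ
  have hwq_meas : AEStronglyMeasurable (fun t => w t ^ q)
      (volume.restrict (Set.Ioc (0:ℝ) 1)) :=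
    (hw_meas.aemeasurable.pow aemeasurable_const).aestronglyMeasurable
  have hwq_int : IntervalIntegrable (fun t => w t ^ q) volume 0 1 := by
    rw [intervalIntegrable_iff_integrableOn_Ioc_of_le zero_le_one]
    refine memLp_one_iff_integrable.mp (MemLp.of_bound hwq_meas ((b * (A * B)) ^ q) ?_)
    filter_upwards [hae] with t ht
    rw [Real.norm_eq_abs, abs_of_nonneg (Real.rpow_nonneg (hw_nonneg t) q)]
    exact Real.rpow_le_rpow (hw_nonneg t) (hwb' t (Set.Ioc_subset_Icc_self ht)) hq0.le
  have hψcont : Continuous (fun t : ℝ => C * θ ^ t) := by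
    have he : (fun t : ℝ => C * θ ^ t) = fun t => C * Real.exp (Real.log θ * t) := by
      funext t; rw [Real.rpow_def_of_pos hθ0]
    rw [he]
    exact continuous_const.mul (Real.continuous_exp.comp (continuous_const.mul continuous_id))
  have hcompare : (∫ t in (0:ℝ)..1, w t ^ q) ≤ C * g₂ θ := by
    have h1 := intervalIntegral.integral_mono_on zero_le_one hwq_int
      (hψcont.intervalIntegrable 0 1) (fun t ht => hkey t ht)
    refine h1.trans_eq ?_
    rw [intervalIntegral.integral_const_mul, integral_rpow_const_base hθ0]
  have hWnn : 0 ≤ ∫ t in (0:ℝ)..1, w t ^ q :=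
    intervalIntegral.integral_nonneg zero_le_one (fun t _ => Real.rpow_nonneg (hw_nonneg t) q)
  -- value of the p-integral
  have hE1 : (∫ t, |1/2 - t| ^ p ∂(volume.restrict (Set.Ioc (0:ℝ) 1)))
      = (1/2:ℝ) ^ p * (1/(p+1)) := by
    rw [← conv1 (fun t => |1/2 - t| ^ p)]
    exact integral_abs_half_rpow hp0
  have h1p : (1:ℝ)/(p+1) = (q-1)/(2*q-1) := by
    have hp1 : p + 1 = (2*q-1)/(q-1) := by
      rw [hpdef]; field_simp [hq1]; all_goals ring
    rw [hp1, one_div_div]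
  have h2p : (1:ℝ)/p = 1 - 1/q := by
    rw [hpdef, one_div_div]; field_simp
  have hE1p : ((1/2:ℝ) ^ p * (1/(p+1))) ^ (1/p)
      = (1/2) * ((q-1)/(2*q-1)) ^ (1 - 1/q) := by
    rw [Real.mul_rpow (Real.rpow_nonneg (by norm_num) p) (one_div_nonneg.2 (by linarith)),
      ← Real.rpow_mul (by norm_num : (0:ℝ) ≤ 1/2), mul_one_div_cancel hp0.ne',
      Real.rpow_one, h1p, h2p]
  have hT2 : (∫ t, w t ^ q ∂(volume.restrict (Set.Ioc (0:ℝ) 1))) ^ (1/q)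
      ≤ b * B * A ^ (1-s) * (g₂ θ) ^ (1/q) := by
    have h1 : (∫ t, w t ^ q ∂(volume.restrict (Set.Ioc (0:ℝ) 1))) ≤ C * g₂ θ := by
      rw [← conv1 (fun t => w t ^ q)]; exact hcompare
    have h2 := Real.rpow_le_rpow (by rw [← conv1 (fun t => w t ^ q)]; exact hWnn) h1
      (one_div_nonneg.2 hq0.le)
    refine h2.trans_eq ?_
    rw [hCdef]
    rw [Real.mul_rpow (mul_nonneg (Real.rpow_nonneg (mul_pos hA0 hB0).le _)
        (Real.rpow_nonneg hden0.le _)) (g₂_nonneg hθ0),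
      Real.mul_rpow (Real.rpow_nonneg (mul_pos hA0 hB0).le _) (Real.rpow_nonneg hden0.le _),
      ← Real.rpow_mul (mul_pos hA0 hB0).le, ← Real.rpow_mul hden0.le]
    have e1 : q * (1-s) * (1/q) = 1 - s := by field_simp
    have e2 : q * (1/q) = 1 := mul_one_div_cancel hq_ne
    rw [e1, e2, Real.rpow_one, Real.mul_rpow hA0.le hB0.le]
    have hBs : B ^ (1-s) * B ^ s = B := by
      rw [← Real.rpow_add hB0]; norm_num
    linear_combination (A ^ (1-s) * b * (g₂ θ) ^ (1/q)) * hBs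
  -- assembly
  have hK : 0 ≤ ((q-1)/(2*q-1)) ^ (1 - 1/q) :=
    Real.rpow_nonneg (div_nonneg (by linarith) (by linarith)) _
  have hstep : (∫ t in (0:ℝ)..1, |1/2 - t| * w t)
      ≤ ((1/2) * ((q-1)/(2*q-1)) ^ (1 - 1/q)) * (b * B * A ^ (1-s) * (g₂ θ) ^ (1/q)) := by
    have hInt : (∫ t in (0:ℝ)..1, |1/2 - t| * w t)
        ≤ (∫ t, |1/2 - t| ^ p ∂(volume.restrict (Set.Ioc (0:ℝ) 1))) ^ (1/p)
          * (∫ t, w t ^ q ∂(volume.restrict (Set.Ioc (0:ℝ) 1))) ^ (1/q) := by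
      rw [conv1 (fun t => |1/2 - t| * w t)]
      exact hHolder
    refine hInt.trans ?_
    rw [hE1, hE1p]
    exact mul_le_mul_of_nonneg_left hT2 (mul_nonneg (by norm_num) hK)
  rw [Real.log_div hb0.ne' ha0.ne', ← hLdef]
  have hT1 : 0 ≤ a * A * B ^ (1-s) * (g₂ ((b * B ^ s / (a * A ^ s)) ^ q)) ^ (1/q) := by
    apply mul_nonneg
    apply mul_nonneg (mul_nonneg ha0.le hA0.le) (Real.rpow_nonneg hB0.le _)
    exact Real.rpow_nonneg (g₂_nonneg (Real.rpow_pos_of_pos (div_pos hden0 hnum0) q)) _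
  calc |(f a + f b)/2 - (1/L) * (∫ x in a..b, f x / x)|
      ≤ L * ∫ t in (0:ℝ)..1, |1/2 - t| * w t := habs1
    _ ≤ L * (((1/2) * ((q-1)/(2*q-1)) ^ (1 - 1/q)) * (b * B * A ^ (1-s) * (g₂ θ) ^ (1/q))) :=
        mul_le_mul_of_nonneg_left hstep hL.le
    _ ≤ _ := by
        nlinarith [mul_nonneg (mul_nonneg (mul_nonneg (by norm_num : (0:ℝ) ≤ 1/2) hL.le) hK) hT1]
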